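/- arXiv:2105.03524 — 6 statements merged into one kernel-verified Lean document; each statement's English description precedes it below -/
import Mathlib

section
/- Define the Somos-5 sequence over the rationals by a_0=a_1=a_2=a_3=a_4=1 and a_n = (a_{n-1}*a_{n-4} + a_{n-2}*a_{n-3})/a_{n-5} for n ≥ 5. Then every term a_n is a positive integer. -/
def somos5 : ℕ → ℚ
  | 0 => 1
  | 1 => 1
  | 2 => 1
  | 3 => 1
  | 4 => 1
  | n + 5 => (somos5 (n + 4) * somos5 (n + 1) + somos5 (n + 3) * somos5 (n + 2)) / somos5 n

lemma somos5_pos : ∀ n, 0 < somos5 n := by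
  intro n
  induction n using Nat.strong_induction_on with
  | _ n ih =>
    match n with
    | 0 => norm_num [somos5]
    | 1 => norm_num [somos5]
    | 2 => norm_num [somos5]
    | 3 => norm_num [somos5]
    | 4 => norm_num [somos5]
    | n + 5 =>
      have h0 := ih n (by omega)
      have h1 := ih (n+1) (by omega)
      have h2 := ih (n+2) (by omega)
      have h3 := ih (n+3) (by omega)
      have h4 := ih (n+4) (by omega)
      show 0 < (somos5 (n + 4) * somos5 (n + 1) + somos5 (n + 3) * somos5 (n + 2)) / somos5 n
      positivity

lemma somos5_ne (n : ℕ) : somos5 n ≠ 0 := ne_of_gt (somos5_pos n)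

lemma rec5 (n : ℕ) : somos5 (n+5) * somos5 n
    = somos5 (n+4) * somos5 (n+1) + somos5 (n+3) * somos5 (n+2) := by
  show (somos5 (n + 4) * somos5 (n + 1) + somos5 (n + 3) * somos5 (n + 2)) / somos5 n * somos5 n = _
  field_simp [somos5_ne n]

lemma somosR : ∀ n : ℕ, somos5 (n+4) * somos5 n + somos5 (n+2)^2
    = ((2 + n % 2 : ℕ) : ℚ) * (somos5 (n+3) * somos5 (n+1)) := by
  intro n
  induction n using Nat.strong_induction_on with
  | _ n ih =>
    match n with
    | 0 => norm_num [somos5]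
    | 1 => norm_num [somos5]
    | m + 2 =>
      have hR := ih m (by omega)
      have e1 := rec5 m
      have e2 := rec5 (m+1)
      have h0 := somos5_ne m
      have h1 := somos5_ne (m+1)
      rw [show (m+2)%2 = m%2 by omega, show m+2+4 = m+1+5 by omega,
        show m+2+2 = m+4 by omega, show m+2+3 = m+5 by omega, show m+2+1 = m+3 by omega]
      rw [show m+1+4 = m+5 by omega, show m+1+3 = m+4 by omega,
        show m+1+2 = m+3 by omega, show m+1+1 = m+2 by omega] at e2
      have hne : somos5 m * somos5 (m+1) ≠ 0 := mul_ne_zero h0 h1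
      refine mul_right_cancel₀ hne ?_
      linear_combination (somos5 m * somos5 (m+2)) * e2 - (somos5 m * somos5 (m+4)) * e1 +
        (somos5 m * somos5 (m+5)) * hR

lemma somos5_den_step (m : ℕ) (d0 : (somos5 m).den = 1) (d1 : (somos5 (m+1)).den = 1)
    (d2 : (somos5 (m+2)).den = 1) (d3 : (somos5 (m+3)).den = 1) (d4 : (somos5 (m+4)).den = 1)
    (hcop : IsCoprime (somos5 m).num (somos5 (m+1)).num) : (somos5 (m+5)).den = 1 := by
  set A0 := (somos5 m).num
  set A1 := (somos5 (m+1)).num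
  set A2 := (somos5 (m+2)).num
  set A3 := (somos5 (m+3)).num
  set A4 := (somos5 (m+4)).num
  have c0 : (A0 : ℚ) = somos5 m := (Rat.den_eq_one_iff _).mp d0
  have c1 : (A1 : ℚ) = somos5 (m+1) := (Rat.den_eq_one_iff _).mp d1
  have c2 : (A2 : ℚ) = somos5 (m+2) := (Rat.den_eq_one_iff _).mp d2
  have c3 : (A3 : ℚ) = somos5 (m+3) := (Rat.den_eq_one_iff _).mp d3
  have c4 : (A4 : ℚ) = somos5 (m+4) := (Rat.den_eq_one_iff _).mp d4
  have h0 : (A0 : ℚ) ≠ 0 := by rw [c0]; exact somos5_ne m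
  have h1 : (A1 : ℚ) ≠ 0 := by rw [c1]; exact somos5_ne (m+1)
  obtain ⟨c, hc⟩ : ∃ c : ℤ, ((2 + (m+1) % 2 : ℕ) : ℚ) = (c : ℚ) :=
    ⟨((2 + (m+1) % 2 : ℕ) : ℤ), by norm_cast⟩
  have hRR := somosR (m+1)
  rw [show m+1+4 = m+5 by omega, show m+1+3 = m+4 by omega,
    show m+1+2 = m+3 by omega, show m+1+1 = m+2 by omega, hc] at hRR
  have eA : somos5 (m+5) = ((A4 * A1 + A3 * A2 : ℤ) : ℚ) / (A0 : ℚ) := by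
    rw [eq_div_iff h0, c0]
    push_cast
    rw [c1, c2, c3, c4]
    exact rec5 m
  have eB : somos5 (m+5) = ((c * (A4 * A2) - A3^2 : ℤ) : ℚ) / (A1 : ℚ) := by
    rw [eq_div_iff h1, c1]
    push_cast
    rw [c2, c3, c4]
    linear_combination hRR
  have dvd0 : ((somos5 (m+5)).den : ℤ) ∣ A0 := by
    rw [eA, ← Rat.divInt_eq_div]; exact Rat.den_dvd _ _
  have dvd1 : ((somos5 (m+5)).den : ℤ) ∣ A1 := by
    rw [eB, ← Rat.divInt_eq_div]; exact Rat.den_dvd _ _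
  have := hcop.isUnit_of_dvd' dvd0 dvd1
  have h2 := Int.isUnit_iff.mp this
  omega

lemma somos5_relZ (m : ℕ) (d1 : (somos5 (m+1)).den = 1)
    (d2 : (somos5 (m+2)).den = 1) (d3 : (somos5 (m+3)).den = 1) (d4 : (somos5 (m+4)).den = 1)
    (d5 : (somos5 (m+5)).den = 1) :
    ∃ c : ℤ, (somos5 (m+5)).num * (somos5 (m+1)).num + (somos5 (m+3)).num ^ 2
      = c * ((somos5 (m+4)).num * (somos5 (m+2)).num) := by
  set A1 := (somos5 (m+1)).num
  set A2 := (somos5 (m+2)).num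
  set A3 := (somos5 (m+3)).num
  set A4 := (somos5 (m+4)).num
  set A5 := (somos5 (m+5)).num
  have c1 : (A1 : ℚ) = somos5 (m+1) := (Rat.den_eq_one_iff _).mp d1
  have c2 : (A2 : ℚ) = somos5 (m+2) := (Rat.den_eq_one_iff _).mp d2
  have c3 : (A3 : ℚ) = somos5 (m+3) := (Rat.den_eq_one_iff _).mp d3
  have c4 : (A4 : ℚ) = somos5 (m+4) := (Rat.den_eq_one_iff _).mp d4
  have c5 : (A5 : ℚ) = somos5 (m+5) := (Rat.den_eq_one_iff _).mp d5
  obtain ⟨c, hc⟩ : ∃ c : ℤ, ((2 + (m+1) % 2 : ℕ) : ℚ) = (c : ℚ) :=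
    ⟨((2 + (m+1) % 2 : ℕ) : ℤ), by norm_cast⟩
  have hRR := somosR (m+1)
  rw [show m+1+4 = m+5 by omega, show m+1+3 = m+4 by omega,
    show m+1+2 = m+3 by omega, show m+1+1 = m+2 by omega, hc] at hRR
  refine ⟨c, ?_⟩
  have : ((A5 * A1 + A3 ^ 2 : ℤ) : ℚ) = ((c * (A4 * A2) : ℤ) : ℚ) := by
    push_cast
    rw [c1, c2, c3, c4, c5]
    linear_combination hRR
  exact_mod_cast this

lemma somos5_main : ∀ n : ℕ, (somos5 n).den = 1 ∧
    IsCoprime (somos5 n).num (somos5 (n+1)).num := by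
  intro n
  induction n using Nat.strong_induction_on with
  | _ n ih =>
    match n with
    | 0 => constructor <;> norm_num [somos5] <;> exact isCoprime_one_left
    | 1 => constructor <;> norm_num [somos5] <;> exact isCoprime_one_left
    | 2 => constructor <;> norm_num [somos5] <;> exact isCoprime_one_left
    | 3 => constructor <;> norm_num [somos5] <;> exact isCoprime_one_left
    | 4 =>
      refine ⟨by norm_num [somos5], ?_⟩
      have h5 : somos5 5 = 2 := by norm_num [somos5]
      have h4 : somos5 4 = 1 := by norm_num [somos5]
      rw [h4, h5]
      norm_num
    | m + 5 =>
      have D0 := (ih m (by omega)).1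
      have D1 := (ih (m+1) (by omega)).1
      have D2 := (ih (m+2) (by omega)).1
      have D3 := (ih (m+3) (by omega)).1
      have D4 := (ih (m+4) (by omega)).1
      have hden5 : (somos5 (m+5)).den = 1 :=
        somos5_den_step m D0 D1 D2 D3 D4 (ih m (by omega)).2
      have hden6 : (somos5 (m+6)).den = 1 := by
        have := somos5_den_step (m+1) D1
          (by rw [show m+1+1 = m+2 by omega]; exact D2)
          (by rw [show m+1+2 = m+3 by omega]; exact D3)
          (by rw [show m+1+3 = m+4 by omega]; exact D4)
          (by rw [show m+1+4 = m+5 by omega]; exact hden5)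
          (by rw [show m+1+1 = m+2 by omega]; exact (ih (m+1) (by omega)).2)
        rw [show m+1+5 = m+6 by omega] at this
        exact this
      obtain ⟨c, hrel⟩ := somos5_relZ (m+1)
        (by rw [show m+1+1 = m+2 by omega]; exact D2)
        (by rw [show m+1+2 = m+3 by omega]; exact D3)
        (by rw [show m+1+3 = m+4 by omega]; exact D4)
        (by rw [show m+1+4 = m+5 by omega]; exact hden5)
        (by rw [show m+1+5 = m+6 by omega]; exact hden6)
      rw [show m+1+5 = m+6 by omega, show m+1+1 = m+2 by omega, show m+1+3 = m+4 by omega,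
        show m+1+4 = m+5 by omega, show m+1+2 = m+3 by omega] at hrel
      set A2 := (somos5 (m+2)).num
      set A3 := (somos5 (m+3)).num
      set A4 := (somos5 (m+4)).num
      set A5 := (somos5 (m+5)).num
      set A6 := (somos5 (m+6)).num
      have cop45 : IsCoprime A4 A5 := by
        have := (ih (m+4) (by omega)).2
        rw [show m+4+1 = m+5 by omega] at this
        exact this
      obtain ⟨u, v, huv⟩ := (IsCoprime.pow_left cop45 : IsCoprime (A4 ^ 2) A5)
      refine ⟨hden5, ?_⟩
      exact ⟨u * c * A3 + v, -(u * A2), by linear_combination huv - u * hrel⟩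

theorem stmt4 : ∀ n : ℕ, ∃ k : ℕ, 0 < k ∧ somos5 n = (k : ℚ) := by
  intro n
  obtain ⟨hden, -⟩ := somos5_main n
  have hpos := somos5_pos n
  have hnum : (0 : ℤ) < (somos5 n).num := Rat.num_pos.mpr hpos
  refine ⟨(somos5 n).num.toNat, by omega, ?_⟩
  have h1 := (Rat.den_eq_one_iff _).mp hden
  have h2 : ((somos5 n).num.toNat : ℤ) = (somos5 n).num := Int.toNat_of_nonneg hnum.le
  calc somos5 n = ((somos5 n).num : ℚ) := h1.symm
    _ = _ := by exact_mod_cast congrArg (fun z : ℤ => (z : ℚ)) h2.symm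
end

section
/- Let (a_n) be an integer-valued sequence satisfying a_{n+5}*a_n = a_{n+4}*a_{n+1} + a_{n+3}*a_{n+2} for all n, with a_0=...=a_4=1. Then for every n ≥ 1, gcd(a_n, a_{n-1}) = 1. -/
theorem stmt5 (a : ℕ → ℤ) (hinit : ∀ i ≤ 4, a i = 1)
    (hrec : ∀ n, a (n + 5) * a n = a (n + 4) * a (n + 1) + a (n + 3) * a (n + 2)) :
    ∀ n ≥ 1, Int.gcd (a n) (a (n - 1)) = 1 := by
  have key : ∀ n : ℕ,
      IsCoprime (a n) (a (n+1)) ∧ IsCoprime (a n) (a (n+2)) ∧ IsCoprime (a n) (a (n+3)) ∧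
      IsCoprime (a n) (a (n+4)) ∧ IsCoprime (a (n+1)) (a (n+2)) ∧ IsCoprime (a (n+1)) (a (n+3)) ∧
      IsCoprime (a (n+1)) (a (n+4)) ∧ IsCoprime (a (n+2)) (a (n+3)) ∧
      IsCoprime (a (n+2)) (a (n+4)) ∧ IsCoprime (a (n+3)) (a (n+4)) := by
    intro n
    induction n with
    | zero =>
      have h0 : a 0 = 1 := hinit 0 (by omega)
      have h1 : a 1 = 1 := hinit 1 (by omega)
      have h2 : a 2 = 1 := hinit 2 (by omega)
      have h3 : a 3 = 1 := hinit 3 (by omega)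
      have h4 : a 4 = 1 := hinit 4 (by omega)
      refine ⟨?_, ?_, ?_, ?_, ?_, ?_, ?_, ?_, ?_, ?_⟩ <;>
        simp only [Nat.zero_add, h0, h1, h2, h3, h4] <;> exact isCoprime_one_left
    | succ n ih =>
      obtain ⟨h01, h02, h03, h04, h12, h13, h14, h23, h24, h34⟩ := ih
      have hr := hrec n
      have new1 : IsCoprime (a (n+1)) (a (n+5)) := by
        have h : IsCoprime (a (n+1)) (a (n+3) * a (n+2)) :=
          IsCoprime.mul_right h13 h12
        have h2 : IsCoprime (a (n+1)) (a (n+5) * a n) := by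
          rw [hr, show a (n+4) * a (n+1) + a (n+3) * a (n+2)
              = a (n+3) * a (n+2) + a (n+1) * a (n+4) from by ring]
          exact h.add_mul_left_right _
        exact h2.of_mul_right_left
      have new2 : IsCoprime (a (n+2)) (a (n+5)) := by
        have h : IsCoprime (a (n+2)) (a (n+4) * a (n+1)) :=
          IsCoprime.mul_right h24 h12.symm
        have h2 : IsCoprime (a (n+2)) (a (n+5) * a n) := by
          rw [hr, show a (n+4) * a (n+1) + a (n+3) * a (n+2)
              = a (n+4) * a (n+1) + a (n+2) * a (n+3) from by ring]
          exact h.add_mul_left_right _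
        exact h2.of_mul_right_left
      have new3 : IsCoprime (a (n+3)) (a (n+5)) := by
        have h : IsCoprime (a (n+3)) (a (n+4) * a (n+1)) :=
          IsCoprime.mul_right h34 h13.symm
        have h2 : IsCoprime (a (n+3)) (a (n+5) * a n) := by
          rw [hr]
          exact h.add_mul_left_right _
        exact h2.of_mul_right_left
      have new4 : IsCoprime (a (n+4)) (a (n+5)) := by
        have h : IsCoprime (a (n+4)) (a (n+3) * a (n+2)) :=
          IsCoprime.mul_right h34.symm h24.symm
        have h2 : IsCoprime (a (n+4)) (a (n+5) * a n) := by
          rw [hr, show a (n+4) * a (n+1) + a (n+3) * a (n+2)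
              = a (n+3) * a (n+2) + a (n+4) * a (n+1) from by ring]
          exact h.add_mul_left_right _
        exact h2.of_mul_right_left
      have e2 : n + 1 + 1 = n + 2 := by omega
      have e3 : n + 1 + 2 = n + 3 := by omega
      have e4 : n + 1 + 3 = n + 4 := by omega
      have e5 : n + 1 + 4 = n + 5 := by omega
      rw [e2, e3, e4, e5]
      exact ⟨h12, h13, h14, new1, h23, h24, new2, h34, new3, new4⟩
  intro n hn
  obtain ⟨m, rfl⟩ : ∃ m, n = m + 1 := ⟨n - 1, by omega⟩
  have h := (key m).1
  simp only [Nat.add_sub_cancel]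
  exact Int.isCoprime_iff_gcd_eq_one.mp h.symm
end

section
/- Let (a_n) be the Somos-5 sequence. Then for every n ≥ 2, gcd(a_n, a_{n-2}) = 1. -/
theorem stmt6 (a : ℕ → ℤ) (hinit : ∀ i ≤ 4, a i = 1)
    (hrec : ∀ n, a (n + 5) * a n = a (n + 4) * a (n + 1) + a (n + 3) * a (n + 2)) :
    ∀ n ≥ 2, Int.gcd (a n) (a (n - 2)) = 1 := by
  -- key: all pairs in any window of 5 consecutive terms are coprime
  have key : ∀ n, (∀ i j, i < j → i ≤ 4 → j ≤ 4 →
      IsCoprime (a (n + i)) (a (n + j))) := by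
    intro n
    induction n with
    | zero =>
      intro i j hij hi hj
      rw [show (0:ℕ) + i = i from by omega, show (0:ℕ) + j = j from by omega,
        hinit i (by omega), hinit j (by omega)]
      exact isCoprime_one_left
    | succ m ih =>
      -- known coprimalities in window m .. m+4
      have h01 : IsCoprime (a (m+1)) (a (m+2)) := ih 1 2 (by omega) (by omega) (by omega)
      have h02 : IsCoprime (a (m+1)) (a (m+3)) := ih 1 3 (by omega) (by omega) (by omega)
      have h03 : IsCoprime (a (m+1)) (a (m+4)) := ih 1 4 (by omega) (by omega) (by omega)
      have h12 : IsCoprime (a (m+2)) (a (m+3)) := ih 2 3 (by omega) (by omega) (by omega)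
      have h13 : IsCoprime (a (m+2)) (a (m+4)) := ih 2 4 (by omega) (by omega) (by omega)
      have h23 : IsCoprime (a (m+3)) (a (m+4)) := ih 3 4 (by omega) (by omega) (by omega)
      have hr := hrec m
      -- a(m+3)*a(m+2) = a(m+5)*a m - a(m+4)*a(m+1)
      have e1 : a (m+3) * a (m+2) = a (m+5) * a m - a (m+4) * a (m+1) := by linarith
      have e2 : a (m+4) * a (m+1) = a (m+5) * a m - a (m+3) * a (m+2) := by linarith
      -- gcd(a(m+4), a(m+5)) = 1
      have c4 : IsCoprime (a (m+4)) (a (m+5)) := by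
        have : IsCoprime (a (m+4)) (a (m+3) * a (m+2)) :=
          (h23.symm).mul_right (h13.symm)
        rw [e1] at this
        have : IsCoprime (a (m+4)) (a (m+5) * a m) := by
          have := this.add_mul_left_right (a (m+1))
          simpa using this
        exact this.of_mul_right_left
      have c3 : IsCoprime (a (m+3)) (a (m+5)) := by
        have : IsCoprime (a (m+3)) (a (m+4) * a (m+1)) :=
          h23.mul_right (h02.symm)
        rw [e2] at this
        have : IsCoprime (a (m+3)) (a (m+5) * a m) := by
          have := this.add_mul_left_right (a (m+2))
          simpa using this
        exact this.of_mul_right_left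
      have c2 : IsCoprime (a (m+2)) (a (m+5)) := by
        have : IsCoprime (a (m+2)) (a (m+4) * a (m+1)) :=
          h13.mul_right (h01.symm)
        rw [e2] at this
        have : IsCoprime (a (m+2)) (a (m+5) * a m) := by
          have := this.add_mul_left_right (a (m+3))
          have e : a (m+5) * a m - a (m+3) * a (m+2) + a (m+2) * a (m+3)
              = a (m+5) * a m := by ring
          rwa [e] at this
        exact this.of_mul_right_left
      have c1 : IsCoprime (a (m+1)) (a (m+5)) := by
        have : IsCoprime (a (m+1)) (a (m+3) * a (m+2)) :=
          h02.mul_right h01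
        rw [e1] at this
        have : IsCoprime (a (m+1)) (a (m+5) * a m) := by
          have := this.add_mul_left_right (a (m+4))
          have e : a (m+5) * a m - a (m+4) * a (m+1) + a (m+1) * a (m+4)
              = a (m+5) * a m := by ring
          rwa [e] at this
        exact this.of_mul_right_left
      intro i j hij hi hj
      interval_cases i <;> interval_cases j
      · exact h01
      · exact h02
      · exact h03
      · exact c1
      · exact h12
      · exact h13
      · exact c2
      · exact h23
      · exact c3
      · exact c4
  intro n hn
  obtain ⟨m, rfl⟩ : ∃ m, n = m + 2 := ⟨n - 2, by omega⟩
  have : IsCoprime (a m) (a (m + 2)) := by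
    have := key m 0 2 (by omega) (by omega) (by omega)
    simpa using this
  have := this.symm
  rw [show m + 2 - 2 = m from by omega]
  exact Int.isCoprime_iff_gcd_eq_one.mp this
end

section
/- Let (a_n) be the Somos-5 sequence. Then for every n ≥ 3, gcd(a_n, a_{n-3}) = 1. -/
theorem stmt7 (a : ℕ → ℤ) (hinit : ∀ i ≤ 4, a i = 1)
    (hrec : ∀ n, a (n + 5) * a n = a (n + 4) * a (n + 1) + a (n + 3) * a (n + 2)) :
    ∀ n ≥ 3, Int.gcd (a n) (a (n - 3)) = 1 := by
  have h0 : a 0 = 1 := hinit 0 (by norm_num)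
  have h1 : a 1 = 1 := hinit 1 (by norm_num)
  have h2 : a 2 = 1 := hinit 2 (by norm_num)
  have h3 : a 3 = 1 := hinit 3 (by norm_num)
  have h4 : a 4 = 1 := hinit 4 (by norm_num)
  have h5 : a 5 = 2 := by
    have := hrec 0
    norm_num [h0, h1, h2, h3, h4] at this
    linarith
  have main : ∀ n,
      (IsCoprime (a (n+3)) (a (n+2)) ∧ IsCoprime (a (n+3)) (a (n+1)) ∧ IsCoprime (a (n+3)) (a n)) ∧
      (IsCoprime (a (n+4)) (a (n+3)) ∧ IsCoprime (a (n+4)) (a (n+2)) ∧ IsCoprime (a (n+4)) (a (n+1))) ∧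
      (IsCoprime (a (n+5)) (a (n+4)) ∧ IsCoprime (a (n+5)) (a (n+3)) ∧ IsCoprime (a (n+5)) (a (n+2))) := by
    intro n
    induction n with
    | zero =>
      norm_num [h0, h1, h2, h3, h4, h5]
    | succ m ih =>
      obtain ⟨hm, hm1, hm2⟩ := ih
      have hr : a (m + 6) * a (m + 1) = a (m + 5) * a (m + 2) + a (m + 4) * a (m + 3) := by
        have h := hrec (m + 1)
        simp only [show m+1+5 = m+6 by omega, show m+1+4 = m+5 by omega,
          show m+1+3 = m+4 by omega, show m+1+2 = m+3 by omega,
          show m+1+1 = m+2 by omega] at h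
        linarith
      simp only [show m+1+3 = m+4 by omega, show m+1+4 = m+5 by omega,
        show m+1+5 = m+6 by omega, show m+1+2 = m+3 by omega, show m+1+1 = m+2 by omega]
      refine ⟨hm1, hm2, ?_, ?_, ?_⟩
      · -- IsCoprime (a (m+6)) (a (m+5))
        have c : IsCoprime (a (m+5)) (a (m+4) * a (m+3)) := hm2.1.mul_right hm2.2.1
        have he : a (m+6) * a (m+1) = a (m+4) * a (m+3) + a (m+5) * a (m+2) := by linarith
        have : IsCoprime (a (m+5)) (a (m+6) * a (m+1)) := by
          rw [he]; exact c.add_mul_left_right _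
        exact this.of_mul_right_left.symm
      · -- IsCoprime (a (m+6)) (a (m+4))
        have c : IsCoprime (a (m+4)) (a (m+5) * a (m+2)) := hm2.1.symm.mul_right hm1.2.1
        have : IsCoprime (a (m+4)) (a (m+6) * a (m+1)) := by
          rw [hr]; exact c.add_mul_left_right _
        exact this.of_mul_right_left.symm
      · -- IsCoprime (a (m+6)) (a (m+3))
        have c : IsCoprime (a (m+3)) (a (m+5) * a (m+2)) := hm2.2.1.symm.mul_right hm.1
        have : IsCoprime (a (m+3)) (a (m+6) * a (m+1)) := by
          rw [hr]
          have : a (m+4) * a (m+3) = a (m+3) * a (m+4) := by ring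
          rw [this]
          exact c.add_mul_left_right _
        exact this.of_mul_right_left.symm
  intro n hn
  obtain ⟨m, rfl⟩ : ∃ m, n = m + 3 := ⟨n - 3, by omega⟩
  have : m + 3 - 3 = m := by omega
  rw [this, ← Int.isCoprime_iff_gcd_eq_one]
  exact (main m).1.2.2
end

section
/- Let (a_n) be the Somos-5 sequence. Then for every n ≥ 4, gcd(a_n, a_{n-4}) = 1, i.e., every term is coprime to each of its four predecessors. -/
theorem stmt8 (a : ℕ → ℤ) (hinit : ∀ i ≤ 4, a i = 1)
    (hrec : ∀ n, a (n + 5) * a n = a (n + 4) * a (n + 1) + a (n + 3) * a (n + 2)) :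
    ∀ n ≥ 4, Int.gcd (a n) (a (n - 4)) = 1 := by
  have key : ∀ m : ℕ, ∀ k, 1 ≤ k → k ≤ 4 → k ≤ m → Int.gcd (a m) (a (m - k)) = 1 := by
    intro m
    induction m using Nat.strong_induction_on with
    | _ m IH =>
      intro k hk1 hk4 hkm
      by_contra hne
      set g := Int.gcd (a m) (a (m - k)) with hg
      have hp : (g.minFac).Prime := Nat.minFac_prime hne
      set p := g.minFac with hpdef
      have hpg : (p:ℤ) ∣ (g:ℤ) := Int.natCast_dvd_natCast.mpr (Nat.minFac_dvd g)
      have hpm : (p:ℤ) ∣ a m := hpg.trans (Int.gcd_dvd_left _ _)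
      have hpk : (p:ℤ) ∣ a (m - k) := hpg.trans (Int.gcd_dvd_right _ _)
      have hpZ : Prime (p:ℤ) := Nat.prime_iff_prime_int.mp hp
      have contra : ∀ i j : ℕ, j < m → i < j → j - i ≤ 4 → (p:ℤ) ∣ a i → (p:ℤ) ∣ a j → False := by
        intro i j hjm hij hd hdi hdj
        have hg1 : Int.gcd (a j) (a (j - (j - i))) = 1 :=
          IH j hjm (j - i) (by omega) hd (by omega)
        have hij' : j - (j - i) = i := by omega
        rw [hij'] at hg1
        have hdg : (p:ℤ) ∣ (Int.gcd (a j) (a i) : ℤ) := Int.dvd_coe_gcd hdj hdi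
        rw [hg1] at hdg
        have : p ∣ 1 := by exact_mod_cast hdg
        exact hp.one_lt.ne' (Nat.dvd_one.mp this)
      rcases Nat.lt_or_ge m 5 with hm5 | hm5
      · have h1 : a m = 1 := hinit m (by omega)
        rw [h1] at hpm
        have : p ∣ 1 := by exact_mod_cast hpm
        exact hp.one_lt.ne' (Nat.dvd_one.mp this)
      · obtain ⟨n, rfl⟩ : ∃ n, m = n + 5 := ⟨m - 5, by omega⟩
        have hr := hrec n
        interval_cases k
        · have h4 : (p:ℤ) ∣ a (n+4) := by
            have h : n + 5 - 1 = n + 4 := by omega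
            rwa [h] at hpk
          have h32 : (p:ℤ) ∣ a (n+3) * a (n+2) := by
            have heq : a (n+3) * a (n+2) = a (n+5) * a n - a (n+4) * a (n+1) := by linarith
            rw [heq]; exact dvd_sub (hpm.mul_right _) (h4.mul_right _)
          rcases hpZ.dvd_mul.mp h32 with h | h
          · exact contra (n+3) (n+4) (by omega) (by omega) (by omega) h h4
          · exact contra (n+2) (n+4) (by omega) (by omega) (by omega) h h4
        · have h3 : (p:ℤ) ∣ a (n+3) := by
            have h : n + 5 - 2 = n + 3 := by omega
            rwa [h] at hpk
          have h41 : (p:ℤ) ∣ a (n+4) * a (n+1) := by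
            have heq : a (n+4) * a (n+1) = a (n+5) * a n - a (n+3) * a (n+2) := by linarith
            rw [heq]; exact dvd_sub (hpm.mul_right _) (h3.mul_right _)
          rcases hpZ.dvd_mul.mp h41 with h | h
          · exact contra (n+3) (n+4) (by omega) (by omega) (by omega) h3 h
          · exact contra (n+1) (n+3) (by omega) (by omega) (by omega) h h3
        · have h2 : (p:ℤ) ∣ a (n+2) := by
            have h : n + 5 - 3 = n + 2 := by omega
            rwa [h] at hpk
          have h41 : (p:ℤ) ∣ a (n+4) * a (n+1) := by
            have heq : a (n+4) * a (n+1) = a (n+5) * a n - a (n+3) * a (n+2) := by linarith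
            rw [heq]; exact dvd_sub (hpm.mul_right _) ((h2.mul_left _))
          rcases hpZ.dvd_mul.mp h41 with h | h
          · exact contra (n+2) (n+4) (by omega) (by omega) (by omega) h2 h
          · exact contra (n+1) (n+2) (by omega) (by omega) (by omega) h h2
        · have h1 : (p:ℤ) ∣ a (n+1) := by
            have h : n + 5 - 4 = n + 1 := by omega
            rwa [h] at hpk
          have h32 : (p:ℤ) ∣ a (n+3) * a (n+2) := by
            have heq : a (n+3) * a (n+2) = a (n+5) * a n - a (n+4) * a (n+1) := by linarith
            rw [heq]; exact dvd_sub (hpm.mul_right _) (h1.mul_left _)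
          rcases hpZ.dvd_mul.mp h32 with h | h
          · exact contra (n+1) (n+3) (by omega) (by omega) (by omega) h1 h
          · exact contra (n+1) (n+2) (by omega) (by omega) (by omega) h1 h
  intro n hn
  exact key n 4 (by omega) (by omega) hn
end

section
/- Let (a_n) be the Somos-5 sequence of positive integers. For every n ≥ 5, gcd(a_n*a_{n-3}, a_{n-1}*a_{n-2}) = 1. -/
private lemma somos_key (x y c : ℤ) (h : IsCoprime x (y - x * c)) : IsCoprime x y := by
  have := h.add_mul_left_right c
  simpa using this

private lemma somos_cop (a : ℕ → ℤ) (hinit : ∀ i ≤ 4, a i = 1)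
    (hrec : ∀ m ≥ 5, a m * a (m - 5) = a (m - 1) * a (m - 4) + a (m - 2) * a (m - 3)) :
    ∀ n, ∀ k, 1 ≤ k → k ≤ 4 → IsCoprime (a n) (a (n - k)) := by
  intro n
  induction n using Nat.strong_induction_on with
  | _ n IH =>
    intro k hk1 hk4
    by_cases hn : n ≤ 4
    · rw [hinit n hn]; exact isCoprime_one_left
    · push_neg at hn
      obtain ⟨m, rfl⟩ : ∃ m, n = m + 5 := ⟨n - 5, by omega⟩
      have hr := hrec (m + 5) (by omega)
      simp only [show m + 5 - 5 = m from by omega, show m + 5 - 1 = m + 4 from by omega,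
        show m + 5 - 2 = m + 3 from by omega, show m + 5 - 3 = m + 2 from by omega,
        show m + 5 - 4 = m + 1 from by omega] at hr
      -- pairwise coprimality among a(m+1),...,a(m+4) from IH
      have c43 : IsCoprime (a (m + 4)) (a (m + 3)) := by
        have := IH (m + 4) (by omega) 1 le_rfl (by omega); simpa using this
      have c42 : IsCoprime (a (m + 4)) (a (m + 2)) := by
        have := IH (m + 4) (by omega) 2 (by omega) (by omega); simpa using this
      have c41 : IsCoprime (a (m + 4)) (a (m + 1)) := by
        have := IH (m + 4) (by omega) 3 (by omega) (by omega); simpa using this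
      have c32 : IsCoprime (a (m + 3)) (a (m + 2)) := by
        have := IH (m + 3) (by omega) 1 le_rfl (by omega); simpa using this
      have c31 : IsCoprime (a (m + 3)) (a (m + 1)) := by
        have := IH (m + 3) (by omega) 2 (by omega) (by omega); simpa using this
      have c21 : IsCoprime (a (m + 2)) (a (m + 1)) := by
        have := IH (m + 2) (by omega) 1 le_rfl (by omega); simpa using this
      -- the four target coprimalities
      have g1 : IsCoprime (a (m + 5)) (a (m + 4)) := by
        have h1 : IsCoprime (a (m + 4)) (a (m + 3) * a (m + 2)) := c43.mul_right c42
        have h2 : a (m + 3) * a (m + 2)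
            = a (m + 5) * a m - a (m + 4) * a (m + 1) := by linarith [hr]
        rw [h2] at h1
        exact ((somos_key _ _ _ h1).of_mul_right_left).symm
      have g2 : IsCoprime (a (m + 5)) (a (m + 3)) := by
        have h1 : IsCoprime (a (m + 3)) (a (m + 4) * a (m + 1)) := c43.symm.mul_right c31
        have h2 : a (m + 4) * a (m + 1)
            = a (m + 5) * a m - a (m + 3) * a (m + 2) := by linarith [hr]
        rw [h2] at h1
        exact ((somos_key _ _ _ h1).of_mul_right_left).symm
      have g3 : IsCoprime (a (m + 5)) (a (m + 2)) := by
        have h1 : IsCoprime (a (m + 2)) (a (m + 4) * a (m + 1)) := c42.symm.mul_right c21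
        have h2 : a (m + 4) * a (m + 1)
            = a (m + 5) * a m - a (m + 2) * a (m + 3) := by linarith [hr]
        rw [h2] at h1
        exact ((somos_key _ _ _ h1).of_mul_right_left).symm
      have g4 : IsCoprime (a (m + 5)) (a (m + 1)) := by
        have h1 : IsCoprime (a (m + 1)) (a (m + 3) * a (m + 2)) := c31.symm.mul_right c21.symm
        have h2 : a (m + 3) * a (m + 2)
            = a (m + 5) * a m - a (m + 1) * a (m + 4) := by linarith [hr]
        rw [h2] at h1
        exact ((somos_key _ _ _ h1).of_mul_right_left).symm
      interval_cases k
      · simpa using g1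
      · simpa using g2
      · simpa using g3
      · simpa using g4

theorem stmt14 (a : ℕ → ℤ) (hpos : ∀ n, 0 < a n) (hinit : ∀ i ≤ 4, a i = 1)
    (hrec : ∀ m ≥ 5, a m * a (m - 5) = a (m - 1) * a (m - 4) + a (m - 2) * a (m - 3)) :
    ∀ n ≥ 5, Int.gcd (a n * a (n - 3)) (a (n - 1) * a (n - 2)) = 1 := by
  intro n hn
  have cop := somos_cop a hinit hrec
  have h1 : IsCoprime (a n) (a (n - 1)) := cop n 1 le_rfl (by omega)
  have h2 : IsCoprime (a n) (a (n - 2)) := cop n 2 (by omega) (by omega)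
  have h3 : IsCoprime (a (n - 3)) (a (n - 1)) := by
    have := (cop (n - 1) 2 (by omega) (by omega)).symm
    rwa [show n - 1 - 2 = n - 3 from by omega] at this
  have h4 : IsCoprime (a (n - 3)) (a (n - 2)) := by
    have := (cop (n - 2) 1 le_rfl (by omega)).symm
    rwa [show n - 2 - 1 = n - 3 from by omega] at this
  have : IsCoprime (a n * a (n - 3)) (a (n - 1) * a (n - 2)) :=
    (h1.mul_right h2).mul_left (h3.mul_right h4)
  rwa [Int.isCoprime_iff_gcd_eq_one] at this
end
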